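/- For every infinite cardinal κ, every 2-coloring c : [κ]^2 → 2 either admits a subset of κ of cardinality κ all of whose 2-element subsets receive color 0, or a subset of order type ω all of whose 2-element subsets receive color 1. In array notation: κ → (κ, ω)^2. -/
import Mathlib
open Cardinal Set

universe u
variable {A : Type u}

/-- The 1-neighborhood of `x`. -/
def DM.N1 (c : Sym2 A → Fin 2) (x : A) : Set A := {y | y ≠ x ∧ c s(x, y) = 1}

/-- 0-homogeneous. -/
def DM.Hom0 (c : Sym2 A → Fin 2) (H : Set A) : Prop :=
  ∀ x ∈ H, ∀ y ∈ H, x ≠ y → c s(x, y) = 0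

/-- 1-homogeneous. -/
def DM.Hom1 (c : Sym2 A → Fin 2) (H : Set A) : Prop :=
  ∀ x ∈ H, ∀ y ∈ H, x ≠ y → c s(x, y) = 1

namespace DM
variable {c : Sym2 A → Fin 2}

lemma fin2 : ∀ v : Fin 2, v ≠ 1 → v = 0 := by decide

lemma fin2' : ∀ v : Fin 2, v ≠ 0 → v = 1 := by decide

lemma mem_N1_symm {x y : A} (h : y ∈ N1 c x) : x ∈ N1 c y := by
  obtain ⟨h1, h2⟩ := h
  exact ⟨h1.symm, by rwa [Sym2.eq_swap]⟩

lemma hom0_mono {H H' : Set A} (h : H' ⊆ H) (h0 : Hom0 c H) : Hom0 c H' :=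
  fun x hx y hy => h0 x (h hx) y (h hy)

lemma hom1_mono {H H' : Set A} (h : H' ⊆ H) (h0 : Hom1 c H) : Hom1 c H' :=
  fun x hx y hy => h0 x (h hx) y (h hy)

/-- A maximal 0-homogeneous subset covers `S` by its 1-shadow. -/
lemma exists_maximal_hom0 (c : Sym2 A → Fin 2) (S : Set A) :
    ∃ M ⊆ S, Hom0 c M ∧ ∀ y ∈ S, y ∉ M → ∃ x ∈ M, y ∈ N1 c x := by
  obtain ⟨M, hM, hmax⟩ := zorn_subset {H : Set A | H ⊆ S ∧ Hom0 c H} (by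
    intro ch hch hchain
    refine ⟨⋃₀ ch, ⟨?_, ?_⟩, fun s hs => subset_sUnion_of_mem hs⟩
    · exact sUnion_subset fun t ht => (hch ht).1
    · intro x hx y hy hxy
      obtain ⟨tx, htx, hxtx⟩ := hx
      obtain ⟨ty, hty, hyty⟩ := hy
      rcases hchain.total htx hty with h | h
      · exact (hch hty).2 x (h hxtx) y hyty hxy
      · exact (hch htx).2 x hxtx y (h hyty) hxy)
  refine ⟨M, hM.1, hM.2, fun y hyS hyM => ?_⟩
  by_contra hcon
  push_neg at hcon
  have hins : Hom0 c (insert y M) := by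
    intro a ha b hb hab
    rcases ha with rfl | haM
    · rcases hb with rfl | hbM
      · exact absurd rfl hab
      · have := hcon b hbM
        have hb1 : c s(b, a) ≠ 1 := fun h => this ⟨hab, h⟩
        rw [Sym2.eq_swap]
        exact fin2 _ hb1
    · rcases hb with rfl | hbM
      · have := hcon a haM
        have hb1 : c s(a, b) ≠ 1 := fun h => this ⟨hab.symm, h⟩
        exact fin2 _ hb1
      · exact hM.2 a haM b hbM hab
  have : insert y M ⊆ M := hmax ⟨insert_subset hyS hM.1, hins⟩ (subset_insert _ _)
  exact hyM (this (mem_insert _ _))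

/-- In a set where every point has small 1-degree, there is a large 0-homogeneous set
(for regular cardinals). -/
lemma extract_regular {κ : Cardinal.{u}} (hreg : κ.IsRegular) {S : Set A}
    (hS : κ ≤ #S) (hdeg : ∀ y ∈ S, #(N1 c y ∩ S : Set A) < κ) :
    ∃ H ⊆ S, Hom0 c H ∧ κ ≤ #H := by
  obtain ⟨M, hMS, hM0, hMcov⟩ := exists_maximal_hom0 c S
  rcases le_or_gt κ #M with h | h
  · exact ⟨M, hMS, hM0, h⟩
  exfalso
  have hcover : S ⊆ M ∪ ⋃ x : M, (N1 c ↑x ∩ S) := by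
    intro y hy
    by_cases hyM : y ∈ M
    · exact Or.inl hyM
    · obtain ⟨x, hxM, hyx⟩ := hMcov y hy hyM
      exact Or.inr (mem_iUnion.2 ⟨⟨x, hxM⟩, hyx, hy⟩)
  have h1 : #(⋃ x : M, (N1 c ↑x ∩ S) : Set A) ≤ #M * ⨆ x : M, #(N1 c ↑x ∩ S : Set A) :=
    mk_iUnion_le _
  have h2 : (⨆ x : M, #(N1 c ↑x ∩ S : Set A)) < κ :=
    Ordinal.iSup_lt (by rw [hreg.cof_eq]; exact h) (fun x => hdeg x (hMS x.2))
  have h3 : #(⋃ x : M, (N1 c ↑x ∩ S) : Set A) < κ :=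
    h1.trans_lt (Cardinal.mul_lt_of_lt hreg.aleph0_le h h2)
  have h4 : #S ≤ #M + #(⋃ x : M, (N1 c ↑x ∩ S) : Set A) :=
    (mk_le_mk_of_subset hcover).trans (mk_union_le _ _)
  exact absurd (hS.trans h4) (Cardinal.add_lt_of_lt hreg.aleph0_le h h3).not_ge

/-- If there is no infinite 1-homogeneous set, every large set has a large subset
in which all 1-degrees are small. -/
lemma descent {κ : Cardinal.{u}} (hκ : ℵ₀ ≤ κ)
    (hfin : ∀ H : Set A, Hom1 c H → H.Finite) {S : Set A} (hS : κ ≤ #S) :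
    ∃ S' ⊆ S, κ ≤ #S' ∧ ∀ y ∈ S', #(N1 c y ∩ S' : Set A) < κ := by
  by_contra hcon
  push_neg at hcon
  have key : ∀ T : {T : Set A // T ⊆ S ∧ κ ≤ #T}, ∃ y ∈ T.1, κ ≤ #(N1 c y ∩ T.1 : Set A) := by
    rintro ⟨T, h1, h2⟩
    obtain ⟨y, hy1, hy2⟩ := hcon T h1 h2
    exact ⟨y, hy1, hy2⟩
  let step : {T : Set A // T ⊆ S ∧ κ ≤ #T} → {T : Set A // T ⊆ S ∧ κ ≤ #T} := fun T =>
    ⟨N1 c (key T).choose ∩ T.1, inter_subset_right.trans T.2.1, (key T).choose_spec.2⟩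
  let chain : ℕ → {T : Set A // T ⊆ S ∧ κ ≤ #T} := fun n =>
    Nat.rec ⟨S, Subset.rfl, hS⟩ (fun _ p => step p) n
  let y : ℕ → A := fun n => (key (chain n)).choose
  have hy : ∀ n, y n ∈ (chain n).1 := fun n => (key (chain n)).choose_spec.1
  have hstep : ∀ n, (chain (n + 1)).1 = N1 c (y n) ∩ (chain n).1 := fun n => rfl
  have hmono : ∀ n m, n ≤ m → (chain m).1 ⊆ (chain n).1 := by
    intro n m hnm
    induction m, hnm using Nat.le_induction with
    | base => exact Subset.rfl
    | succ m hm ih =>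
      intro a ha
      rw [hstep m] at ha
      exact ih ha.2
  have hlt : ∀ n m, n < m → y m ∈ N1 c (y n) := by
    intro n m hnm
    have := hmono (n + 1) m hnm (hy m)
    rw [hstep n] at this
    exact this.1
  have hinj : Function.Injective y := by
    intro n m hnm
    by_contra hne
    rcases Nat.lt_or_ge n m with h | h
    · exact (hlt n m h).1 hnm.symm
    · exact (hlt m n (lt_of_le_of_ne h (Ne.symm hne))).1 hnm
  have hhom : Hom1 c (Set.range y) := by
    rintro a ⟨n, rfl⟩ b ⟨m, rfl⟩ hab
    rcases Nat.lt_or_ge n m with h | h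
    · exact (hlt n m h).2
    · have hmn : m < n := lt_of_le_of_ne h (fun e => hab (e ▸ rfl))
      rw [Sym2.eq_swap]
      exact (hlt m n hmn).2
  exact (infinite_range_of_injective hinj) (hfin _ hhom)

/-- The regular case of Dushnik–Miller. -/
lemma regular_case {κ : Cardinal.{u}} (hreg : κ.IsRegular)
    (hfin : ∀ H : Set A, Hom1 c H → H.Finite) {S : Set A} (hS : κ ≤ #S) :
    ∃ H ⊆ S, Hom0 c H ∧ κ ≤ #H := by
  obtain ⟨S', hS'S, hS', hdeg⟩ := descent hreg.aleph0_le hfin hS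
  obtain ⟨H, hH, h0, hκH⟩ := extract_regular hreg hS' hdeg
  exact ⟨H, hH.trans hS'S, h0, hκH⟩

/-- The singular case of Dushnik–Miller. -/
lemma singular_case {κ : Cardinal.{u}} (hκ : ℵ₀ ≤ κ) (hsing : ¬κ.IsRegular)
    (hfin : ∀ H : Set A, Hom1 c H → H.Finite) {S : Set A} (hS : κ ≤ #S)
    (hdeg : ∀ y ∈ S, #(N1 c y ∩ S : Set A) < κ) :
    ∃ H ⊆ S, Hom0 c H ∧ κ ≤ #H := by
  classical
  have hℵlt : ℵ₀ < κ := lt_of_le_of_ne hκ (fun e => hsing (e ▸ isRegular_aleph0))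
  have hlim : ∀ lam, lam < κ → Order.succ lam < κ := by
    intro lam hlam
    rcases (Order.succ_le_of_lt hlam).lt_or_eq with h | h
    · exact h
    exfalso
    rcases lt_or_ge lam ℵ₀ with h' | h'
    · exact absurd (h ▸ Order.succ_le_of_lt h' : κ ≤ ℵ₀) hℵlt.not_ge
    · exact hsing (h ▸ isRegular_succ h')
  have hcof : κ.ord.cof < κ := not_le.1 (fun h => hsing ⟨hκ, h⟩)
  obtain ⟨ι, f, hlsub, hcard⟩ := Ordinal.exists_lsub_cof κ.ord
  set ν := κ.ord.cof with hν
  -- the cofinal family of regular cardinals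
  let fam : ι → Cardinal.{u} := fun i => Order.succ (ℵ₀ ⊔ (f i).card)
  have hfamreg : ∀ i, (fam i).IsRegular := fun i => isRegular_succ le_sup_left
  have hfamlt : ∀ i, fam i < κ := by
    intro i
    refine hlim _ (max_lt hℵlt ?_)
    have := hlsub ▸ Ordinal.lt_lsub f i
    exact Cardinal.lt_ord.1 this
  have hfamcof : ∀ lam, lam < κ → ∃ i, lam ≤ fam i := by
    intro lam hlam
    have h1 : lam.ord < Ordinal.lsub f := hlsub.symm ▸ (Cardinal.ord_lt_ord.2 hlam)
    obtain ⟨i, hi⟩ := Ordinal.lt_lsub_iff.1 h1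
    refine ⟨i, ?_⟩
    calc lam = lam.ord.card := (card_ord lam).symm
    _ ≤ (f i).card := Ordinal.card_le_card hi
    _ ≤ ℵ₀ ⊔ (f i).card := le_sup_right
    _ ≤ fam i := Order.le_succ _
  -- reindex by the canonical well-order of the cofinality
  have hOcard : #ν.ord.ToType = ν := by rw [Cardinal.mk_toType, card_ord]
  obtain ⟨e⟩ : Nonempty (ι ≃ ν.ord.ToType) := Cardinal.eq.1 (hcard.trans hOcard.symm)
  let fam' : ν.ord.ToType → Cardinal.{u} := fun j => fam (e.symm j)
  have hreg' : ∀ j, (fam' j).IsRegular := fun j => hfamreg _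
  have hlt' : ∀ j, fam' j < κ := fun j => hfamlt _
  have hcof' : ∀ lam, lam < κ → ∃ j : ν.ord.ToType, lam ≤ fam' j := by
    intro lam hlam
    obtain ⟨i, hi⟩ := hfamcof lam hlam
    exact ⟨e i, by simpa [fam'] using hi⟩
  have hIio : ∀ j : ν.ord.ToType, #{k : ν.ord.ToType // k < j} < ν := by
    intro j
    exact lt_of_eq_of_lt (@Ordinal.card_typein _ _ isWellOrder_lt j) (Cardinal.card_typein_toType_lt ν j)
  -- the extension step
  have ext : ∀ W : Set A, #W < κ → ∀ lam : Cardinal.{u}, lam.IsRegular → lam < κ →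
      ∃ H : Set A, H ⊆ S ∧ (∀ x ∈ H, x ∉ W) ∧ Hom0 c H ∧ #H = lam ∧
        #(⋃ x : H, (N1 c ↑x ∩ S) : Set A) < κ := by
    intro W hW lam hreg hlam
    have hSW : κ ≤ #(S \ W : Set A) := by
      by_contra h
      push_neg at h
      have hdm := mk_diff_add_mk (inter_subset_left : S ∩ W ⊆ S)
      rw [diff_self_inter] at hdm
      have h2 : #(S ∩ W : Set A) < κ := (mk_le_mk_of_subset inter_subset_right).trans_lt hW
      have : #S < κ := hdm ▸ Cardinal.add_lt_of_lt hκ h h2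
      exact absurd hS this.not_ge
    set T : ι → Set A := fun i => {y | y ∈ S \ W ∧ #(N1 c y ∩ S : Set A) ≤ fam i} with hT
    have hcoverT : (S \ W : Set A) ⊆ ⋃ i, T i := by
      intro y hy
      obtain ⟨i, hi⟩ := hfamcof _ (hdeg y hy.1)
      exact mem_iUnion.2 ⟨i, hy, hi⟩
    have hex : ∃ i, lam ≤ #(T i) := by
      by_contra h
      push_neg at h
      have h1 : #(⋃ i, T i : Set A) ≤ #ι * ⨆ i, #(T i) := mk_iUnion_le T
      have h2 : (⨆ i, #(T i)) ≤ lam := ciSup_le' fun i => (h i).le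
      have h3 : #ι < κ := by rw [hcard]; exact hcof
      have : #(S \ W : Set A) < κ := by
        refine ((mk_le_mk_of_subset hcoverT).trans h1).trans_lt ?_
        exact (mul_le_mul_right h2 _).trans_lt (Cardinal.mul_lt_of_lt hκ h3 hlam)
      exact absurd hSW this.not_ge
    obtain ⟨i₀, hi₀⟩ := hex
    obtain ⟨H₁, hH₁T, hH₁0, hH₁κ⟩ := regular_case hreg hfin hi₀
    obtain ⟨H, hHH₁, hHcard⟩ := le_mk_iff_exists_subset.1 hH₁κ
    have hHT : H ⊆ T i₀ := hHH₁.trans hH₁T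
    have hHSW : H ⊆ S \ W := fun x hx => (hHT hx).1
    refine ⟨H, fun x hx => (hHSW hx).1, fun x hx => (hHSW hx).2, hom0_mono hHH₁ hH₁0, hHcard, ?_⟩
    have h1 : #(⋃ x : H, (N1 c ↑x ∩ S) : Set A) ≤ #H * ⨆ x : H, #(N1 c ↑x ∩ S : Set A) :=
      mk_iUnion_le _
    have h2 : (⨆ x : H, #(N1 c ↑x ∩ S : Set A)) ≤ fam i₀ := ciSup_le' fun x => (hHT x.2).2
    refine h1.trans_lt ?_
    calc #H * (⨆ x : H, #(N1 c ↑x ∩ S : Set A)) ≤ #H * fam i₀ := mul_le_mul_right h2 _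
    _ < κ := Cardinal.mul_lt_of_lt hκ (hHcard ▸ hlam) (hfamlt i₀)
  -- transfinite recursion along `ν.ord.toType`
  have wfO : WellFounded ((· < ·) : ν.ord.ToType → ν.ord.ToType → Prop) := wellFounded_lt
  let step : ∀ j : ν.ord.ToType, (∀ k, k < j → Set A) → Set A := fun j rec =>
    if h : #(⋃ p : {k // k < j}, (rec p.1 p.2 ∪ ⋃ x : rec p.1 p.2, (N1 c ↑x ∩ S)) : Set A) < κ then
      (ext _ h (fam' j) (hreg' j) (hlt' j)).choose
    else ∅
  let H : ν.ord.ToType → Set A := fun j => wfO.fix step j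
  let Wset : ν.ord.ToType → Set A := fun j =>
    ⋃ p : {k // k < j}, (H p.1 ∪ ⋃ x : H p.1, (N1 c ↑x ∩ S))
  have Hfix : ∀ j, H j =
      if h : #(Wset j) < κ then (ext (Wset j) h (fam' j) (hreg' j) (hlt' j)).choose else ∅ := by
    intro j
    exact WellFounded.fix_eq wfO step j
  have spec : ∀ j, #(Wset j) < κ →
      H j ⊆ S ∧ (∀ x ∈ H j, x ∉ Wset j) ∧ Hom0 c (H j) ∧ #(H j) = fam' j ∧
        #(⋃ x : H j, (N1 c ↑x ∩ S) : Set A) < κ := by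
    intro j hj
    have h1 : H j = (ext (Wset j) hj (fam' j) (hreg' j) (hlt' j)).choose := by
      rw [Hfix j, dif_pos hj]
    obtain ⟨a1, a2, a3, a4, a5⟩ := (ext (Wset j) hj (fam' j) (hreg' j) (hlt' j)).choose_spec
    rw [h1]
    exact ⟨a1, a2, a3, a4, a5⟩
  have hWlt : ∀ j, #(Wset j) < κ := by
    refine fun j => wfO.induction (C := fun j => #(Wset j) < κ) j ?_
    intro j ih
    have h1 : #(Wset j) ≤ #{k // k < j} *
        ⨆ p : {k // k < j}, #((H p.1 ∪ ⋃ x : H p.1, (N1 c ↑x ∩ S)) : Set A) :=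
      mk_iUnion_le _
    have hterm : ∀ p : {k // k < j},
        #((H p.1 ∪ ⋃ x : H p.1, (N1 c ↑x ∩ S)) : Set A) < κ := by
      intro p
      obtain ⟨b1, b2, b3, b4, b5⟩ := spec p.1 (ih p.1 p.2)
      refine (mk_union_le _ _).trans_lt (Cardinal.add_lt_of_lt hκ ?_ b5)
      rw [b4]
      exact hlt' p.1
    have h2 : (⨆ p : {k // k < j}, #((H p.1 ∪ ⋃ x : H p.1, (N1 c ↑x ∩ S)) : Set A)) < κ :=
      Ordinal.iSup_lt (by rw [← hν]; exact hIio j) hterm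
    exact h1.trans_lt (Cardinal.mul_lt_of_lt hκ ((hIio j).trans hcof) h2)
  refine ⟨⋃ j, H j, iUnion_subset fun j => (spec j (hWlt j)).1, ?_, ?_⟩
  · rintro x hx y hy hxy
    obtain ⟨Tx, ⟨j₁, rfl⟩, hx⟩ := hx
    obtain ⟨Ty, ⟨j₂, rfl⟩, hy⟩ := hy
    rcases lt_trichotomy j₁ j₂ with h | h | h
    · by_contra hc1
      have hc1' : c s(x, y) = 1 := fin2' _ hc1
      have hyS : y ∈ S := (spec j₂ (hWlt j₂)).1 hy
      have hymem : y ∈ Wset j₂ :=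
        mem_iUnion.2 ⟨⟨j₁, h⟩, Or.inr (mem_iUnion.2 ⟨⟨x, hx⟩, ⟨hxy.symm, hc1'⟩, hyS⟩)⟩
      exact (spec j₂ (hWlt j₂)).2.1 y hy hymem
    · subst h
      exact (spec j₁ (hWlt j₁)).2.2.1 x hx y hy hxy
    · by_contra hc1
      have hc1' : c s(y, x) = 1 := by rw [Sym2.eq_swap]; exact fin2' _ hc1
      have hxS : x ∈ S := (spec j₁ (hWlt j₁)).1 hx
      have hxmem : x ∈ Wset j₁ :=
        mem_iUnion.2 ⟨⟨j₂, h⟩, Or.inr (mem_iUnion.2 ⟨⟨y, hy⟩, ⟨hxy, hc1'⟩, hxS⟩)⟩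
      exact (spec j₁ (hWlt j₁)).2.1 x hx hxmem
  · by_contra hlt2
    push_neg at hlt2
    obtain ⟨j, hj⟩ := hcof' _ (hlim _ hlt2)
    have hle : fam' j ≤ #(⋃ j, H j : Set A) := by
      rw [← (spec j (hWlt j)).2.2.2.1]
      exact mk_le_mk_of_subset (subset_iUnion H j)
    exact absurd (Order.succ_le_iff.1 (hj.trans hle)) (lt_irrefl _)

end DM

/-- Dushnik–Miller: for every infinite cardinal `κ`, `κ → (κ, ω)²`. -/
theorem dushnik_miller (κ : Cardinal.{u}) (hκ : ℵ₀ ≤ κ)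
    (A : Type u) (hA : #A = κ) (c : Sym2 A → Fin 2) :
    (∃ A₀ : Set A, #A₀ = κ ∧ ∀ x ∈ A₀, ∀ y ∈ A₀, x ≠ y → c s(x, y) = 0) ∨
    (∃ A₁ : Set A, #A₁ = ℵ₀ ∧ ∀ x ∈ A₁, ∀ y ∈ A₁, x ≠ y → c s(x, y) = 1) := by
  classical
  by_cases h1 : ∃ A₁ : Set A, #A₁ = ℵ₀ ∧ ∀ x ∈ A₁, ∀ y ∈ A₁, x ≠ y → c s(x, y) = 1
  · exact Or.inr h1
  left
  have hfin : ∀ H : Set A, DM.Hom1 c H → H.Finite := by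
    intro H hH
    by_contra hinf
    have hℵ : ℵ₀ ≤ #H := Cardinal.aleph0_le_mk_iff.2 (Set.infinite_coe_iff.2 hinf)
    obtain ⟨p, hpH, hp⟩ := Cardinal.le_mk_iff_exists_subset.1 hℵ
    exact h1 ⟨p, hp, DM.hom1_mono hpH hH⟩
  have hSuniv : κ ≤ #(Set.univ : Set A) := by rw [Cardinal.mk_univ, hA]
  have main : ∃ H : Set A, DM.Hom0 c H ∧ κ ≤ #H := by
    by_cases hreg : κ.IsRegular
    · obtain ⟨H, _, h0, hκH⟩ := DM.regular_case hreg hfin hSuniv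
      exact ⟨H, h0, hκH⟩
    · obtain ⟨S, hSu, hSκ, hdeg⟩ := DM.descent hκ hfin hSuniv
      obtain ⟨H, hHS, h0, hκH⟩ := DM.singular_case hκ hreg hfin hSκ hdeg
      exact ⟨H, h0, hκH⟩
  obtain ⟨H, h0, hκH⟩ := main
  have hHκ : #H = κ := le_antisymm (hA ▸ Cardinal.mk_set_le H) hκH
  exact ⟨H, hHκ, h0⟩
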